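/- Bias of the factual-adjusted contrast under parallel linear structural models: if E[Y(1) | N = n] = α₁ + γn and E[Y(0) | N = n] = α₀ + γn, and the observed N has distribution P_N = αP_{N(1)} + βP_{N(0)} with α + β = 1, then E_{N~P_N}[E[Y(1)|N]] - E_{N~P_N}[E[Y(0)|N]] - (E_{N(1)}[E[Y(1)|N]] - E_{N(0)}[E[Y(0)|N]]) = -γ·E[N(1) - N(0)]. -/
import Mathlib


open MeasureTheory

/-- Bias of the factual-adjusted contrast under parallel linear structural models:
if `E[Y(1)|N=n] = α₁ + γn`, `E[Y(0)|N=n] = α₀ + γn`, and the observed `N` has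
distribution `P_N = α P_{N(1)} + β P_{N(0)}` with `α + β = 1`, then the difference
between the factual-adjusted contrast and the counterfactual contrast equals
`-γ (E[N(1)] - E[N(0)])`. -/
theorem stmt10
    (P1 P0 : Measure ℝ) [IsProbabilityMeasure P1] [IsProbabilityMeasure P0]
    (hP1int : Integrable (fun n => n) P1) (hP0int : Integrable (fun n => n) P0)
    (α β : ℝ) (hα : 0 ≤ α) (hβ : 0 ≤ β) (hαβ : α + β = 1)
    (PN : Measure ℝ) (hPN : PN = ENNReal.ofReal α • P1 + ENNReal.ofReal β • P0)
    (α₁ α₀ γ : ℝ) :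
    ((∫ n, (α₁ + γ * n) ∂PN) - ∫ n, (α₀ + γ * n) ∂PN)
      - ((∫ n, (α₁ + γ * n) ∂P1) - ∫ n, (α₀ + γ * n) ∂P0)
    = -γ * ((∫ n, n ∂P1) - ∫ n, n ∂P0) := by
  have hPNprob : IsProbabilityMeasure PN := by
    constructor
    rw [hPN]
    simp [measure_univ, ← ENNReal.ofReal_add hα hβ, hαβ]
  have hPNint : Integrable (fun n => n) PN := by
    rw [hPN]
    exact ((hP1int.smul_measure ENNReal.ofReal_ne_top).add_measure
      (hP0int.smul_measure ENNReal.ofReal_ne_top))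
  have key : ∀ (μ : Measure ℝ) [IsProbabilityMeasure μ],
      Integrable (fun n => n) μ → ∀ c : ℝ,
      (∫ n, (c + γ * n) ∂μ) = c + γ * ∫ n, n ∂μ := by
    intro μ _ hμ c
    rw [integral_add (integrable_const c) (hμ.const_mul γ), integral_const,
      integral_const_mul]
    simp
  rw [key PN hPNint α₁, key PN hPNint α₀, key P1 hP1int α₁, key P0 hP0int α₀]
  ring
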